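/- Let x ∈ B̄(a,ρ) with H(x) ≠ 0, let t > 0 and set x' = x − t·H(x)/‖H(x)‖. Then for every y ∈ B̄(a,ρ): ‖x' − y‖² ≤ ‖x − y‖² + t² + (2t/‖H(x)‖)·(f(y) − f(x)). In particular, taking infima over the median set, infDist(x', 𝔐_μ)² ≤ infDist(x, 𝔐_μ)² + t² + 2t·(f_* − f(x)). -/

import Mathlib

open MeasureTheory Metric RealInnerProductSpace

/-- Euclidean case of Lemma 4.5, fundamental inequality.
For `x ∈ B̄(a,ρ)` with `H x ≠ 0`, `t > 0` and `x' = x - t·H(x)/‖H(x)‖`, one has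
`‖x' - y‖² ≤ ‖x - y‖² + t² + (2t/‖H x‖)(f y - f x)` for every `y ∈ B̄(a,ρ)`, and
`infDist(x', 𝔐_μ)² ≤ infDist(x, 𝔐_μ)² + t² + 2t(f_* - f x)`. -/
theorem stmt12 {n : ℕ} (hn : 1 ≤ n) (a : EuclideanSpace ℝ (Fin n)) (ρ : ℝ) (hρ : 0 < ρ)
    (μ : Measure (EuclideanSpace ℝ (Fin n))) [IsProbabilityMeasure μ]
    (hsupp : {x : EuclideanSpace ℝ (Fin n) | ∀ U ∈ nhds x, 0 < μ U} ⊆ ball a ρ)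
    (f : EuclideanSpace ℝ (Fin n) → ℝ)
    (hf : ∀ x, f x = ∫ p, ‖x - p‖ ∂μ)
    (H : EuclideanSpace ℝ (Fin n) → EuclideanSpace ℝ (Fin n))
    (hH : ∀ x, H x = ∫ p in ({x}ᶜ : Set (EuclideanSpace ℝ (Fin n))), ‖x - p‖⁻¹ • (x - p) ∂μ)
    (fstar : ℝ) (hfstar : fstar = sInf (f '' closedBall a ρ))
    (M : Set (EuclideanSpace ℝ (Fin n)))
    (hM : M = {y ∈ closedBall a ρ | IsMinOn f (closedBall a ρ) y})
    (x : EuclideanSpace ℝ (Fin n)) (hx : x ∈ closedBall a ρ) (hHx : H x ≠ 0)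
    (t : ℝ) (ht : 0 < t)
    (x' : EuclideanSpace ℝ (Fin n)) (hx' : x' = x - (t / ‖H x‖) • H x) :
    (∀ y ∈ closedBall a ρ,
      ‖x' - y‖ ^ 2 ≤ ‖x - y‖ ^ 2 + t ^ 2 + 2 * t / ‖H x‖ * (f y - f x)) ∧
    infDist x' M ^ 2 ≤ infDist x M ^ 2 + t ^ 2 + 2 * t * (fstar - f x) := by
  -- μ is concentrated on the ball
  have hball : ∀ᵐ p ∂μ, p ∈ ball a ρ := by
    rw [ae_iff]
    refine measure_null_of_locally_null _ (fun z hz => ?_)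
    have hz' : ¬ ∀ U ∈ nhds z, 0 < μ U := fun h => hz (hsupp h)
    push_neg at hz'
    obtain ⟨U, hU, hU0⟩ := hz'
    exact ⟨U, nhdsWithin_le_nhds hU, le_antisymm hU0 (zero_le)⟩
  -- integrability of distance functions
  have hint : ∀ z : EuclideanSpace ℝ (Fin n), Integrable (fun p => ‖z - p‖) μ := by
    intro z
    refine Integrable.mono' (integrable_const (‖z - a‖ + ρ)) ?_ ?_
    · exact (continuous_const.sub continuous_id).norm.aestronglyMeasurable
    · filter_upwards [hball] with p hp
      rw [norm_norm, ← dist_eq_norm]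
      have h1 : dist z p ≤ dist z a + dist a p := dist_triangle _ _ _
      have h2 : dist a p < ρ := by rw [dist_comm]; exact mem_ball.mp hp
      rw [← dist_eq_norm]
      linarith
  -- integrability of unit-vector field
  have hintu : ∀ z : EuclideanSpace ℝ (Fin n),
      Integrable (fun p => ‖z - p‖⁻¹ • (z - p)) μ := by
    intro z
    refine Integrable.mono' (integrable_const (1 : ℝ)) ?_ (ae_of_all _ fun p => ?_)
    · exact (((continuous_const.sub continuous_id).norm.measurable.inv).smul
        (continuous_const.sub continuous_id).measurable).aestronglyMeasurable
    · rw [norm_smul, Real.norm_eq_abs, abs_inv, abs_norm]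
      rcases eq_or_ne (z - p) 0 with h | h
      · simp [h]
      · rw [inv_mul_cancel₀ (norm_ne_zero_iff.mpr h)]
  have hHnorm : 0 < ‖H x‖ := norm_pos_iff.mpr hHx
  -- ‖H x‖ ≤ 1
  have hH1 : ‖H x‖ ≤ 1 := by
    rw [hH]
    calc ‖∫ p in ({x}ᶜ : Set (EuclideanSpace ℝ (Fin n))), ‖x - p‖⁻¹ • (x - p) ∂μ‖
        ≤ ∫ p in ({x}ᶜ : Set (EuclideanSpace ℝ (Fin n))), ‖‖x - p‖⁻¹ • (x - p)‖ ∂μ :=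
          norm_integral_le_integral_norm _
      _ ≤ ∫ _p in ({x}ᶜ : Set (EuclideanSpace ℝ (Fin n))), (1 : ℝ) ∂μ := by
          refine integral_mono ((hintu x).norm.restrict) (integrable_const _) fun p => ?_
          rw [norm_smul, Real.norm_eq_abs, abs_inv, abs_norm]
          rcases eq_or_ne (x - p) 0 with h | h
          · simp [h]
          · rw [inv_mul_cancel₀ (norm_ne_zero_iff.mpr h)]
      _ = (μ ({x}ᶜ : Set (EuclideanSpace ℝ (Fin n)))).toReal := by
          simp [integral_const, Measure.real]
      _ ≤ 1 := by
          have := prob_le_one (μ := μ) (s := ({x}ᶜ : Set (EuclideanSpace ℝ (Fin n))))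
          exact ENNReal.toReal_le_of_le_ofReal zero_le_one (by simpa using this)
  -- subgradient inequality
  have key : ∀ y : EuclideanSpace ℝ (Fin n), f x - f y ≤ ⟪H x, x - y⟫ := by
    intro y
    have h1 : ⟪H x, x - y⟫
        = ∫ p in ({x}ᶜ : Set (EuclideanSpace ℝ (Fin n))),
            ⟪x - y, ‖x - p‖⁻¹ • (x - p)⟫ ∂μ := by
      rw [hH, real_inner_comm]
      exact (integral_inner ((hintu x).restrict) (x - y)).symm
    have h2 : ∀ p, p ≠ x → ‖x - p‖ - ‖y - p‖ ≤ ⟪x - y, ‖x - p‖⁻¹ • (x - p)⟫ := by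
      intro p hp
      have hr : 0 < ‖x - p‖ := norm_sub_pos_iff.mpr (Ne.symm hp)
      have e1 : ⟪x - p, x - y⟫ = ‖x - p‖ ^ 2 - ⟪x - p, y - p⟫ := by
        have hxy : x - y = (x - p) - (y - p) := by abel
        rw [hxy, inner_sub_right, real_inner_self_eq_norm_sq]
      have e2 : ⟪x - p, y - p⟫ ≤ ‖x - p‖ * ‖y - p‖ := real_inner_le_norm _ _
      rw [real_inner_smul_right, real_inner_comm]
      have h3 : ‖x - p‖ * (‖x - p‖ - ‖y - p‖) ≤ ⟪x - p, x - y⟫ := by nlinarith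
      calc ‖x - p‖ - ‖y - p‖ = ‖x - p‖⁻¹ * (‖x - p‖ * (‖x - p‖ - ‖y - p‖)) := by
            field_simp
        _ ≤ ‖x - p‖⁻¹ * ⟪x - p, x - y⟫ :=
            mul_le_mul_of_nonneg_left h3 (inv_nonneg.mpr hr.le)
    have hg : Integrable (fun p => ‖x - p‖ - ‖y - p‖) μ := (hint x).sub (hint y)
    have h4 : ∫ p in ({x}ᶜ : Set (EuclideanSpace ℝ (Fin n))), (‖x - p‖ - ‖y - p‖) ∂μ
        ≤ ∫ p in ({x}ᶜ : Set (EuclideanSpace ℝ (Fin n))),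
            ⟪x - y, ‖x - p‖⁻¹ • (x - p)⟫ ∂μ := by
      refine integral_mono_ae hg.restrict ((hintu x).restrict.const_inner (x - y)) ?_
      refine (ae_restrict_iff' (measurableSet_singleton x).compl).mpr
        (ae_of_all _ fun p hp => h2 p ?_)
      simpa using hp
    have h5 : ∫ p, (‖x - p‖ - ‖y - p‖) ∂μ
        ≤ ∫ p in ({x}ᶜ : Set (EuclideanSpace ℝ (Fin n))), (‖x - p‖ - ‖y - p‖) ∂μ := by
      have hsplit := integral_add_compl (measurableSet_singleton x) hg
      have hneg : ∫ p in ({x} : Set (EuclideanSpace ℝ (Fin n))), (‖x - p‖ - ‖y - p‖) ∂μ ≤ 0 := by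
        refine setIntegral_nonpos (measurableSet_singleton x) fun p hp => ?_
        rcases hp with rfl
        simp
      linarith
    have h6 : f x - f y = ∫ p, (‖x - p‖ - ‖y - p‖) ∂μ := by
      rw [hf x, hf y, integral_sub (hint x) (hint y)]
    rw [h1, h6]
    exact h5.trans h4
  -- Part 1
  have part1 : ∀ y ∈ closedBall a ρ,
      ‖x' - y‖ ^ 2 ≤ ‖x - y‖ ^ 2 + t ^ 2 + 2 * t / ‖H x‖ * (f y - f x) := by
    intro y _hy
    have hxy : x' - y = (x - y) - (t / ‖H x‖) • H x := by
      rw [hx', sub_right_comm]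
    have hns : ‖(t / ‖H x‖) • H x‖ = t := by
      rw [norm_smul, Real.norm_eq_abs, abs_of_pos (div_pos ht hHnorm),
        div_mul_cancel₀ _ hHnorm.ne']
    have hip : ⟪x - y, (t / ‖H x‖) • H x⟫ = (t / ‖H x‖) * ⟪H x, x - y⟫ := by
      rw [real_inner_smul_right, real_inner_comm]
    have hsq : ‖x' - y‖ ^ 2
        = ‖x - y‖ ^ 2 - 2 * ((t / ‖H x‖) * ⟪H x, x - y⟫) + t ^ 2 := by
      rw [hxy, norm_sub_sq_real, hns, hip]
    have hk := key y
    have hpos : 0 < t / ‖H x‖ := div_pos ht hHnorm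
    have : (t / ‖H x‖) * (f x - f y) ≤ (t / ‖H x‖) * ⟪H x, x - y⟫ :=
      mul_le_mul_of_nonneg_left hk hpos.le
    rw [hsq]
    have harith : 2 * t / ‖H x‖ * (f y - f x) = -(2 * ((t / ‖H x‖) * (f x - f y))) := by
      field_simp; ring
    linarith [this]
  refine ⟨part1, ?_⟩
  -- f is Lipschitz hence continuous
  have hlip : LipschitzWith 1 f := by
    refine LipschitzWith.of_dist_le_mul fun z w => ?_
    rw [Real.dist_eq, hf z, hf w, ← integral_sub (hint z) (hint w), NNReal.coe_one, one_mul]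
    calc |∫ p, (‖z - p‖ - ‖w - p‖) ∂μ| ≤ ∫ p, |‖z - p‖ - ‖w - p‖| ∂μ := by
          simpa [Real.norm_eq_abs] using
            norm_integral_le_integral_norm (μ := μ) (fun p => ‖z - p‖ - ‖w - p‖)
      _ ≤ ∫ _p, dist z w ∂μ := by
          refine integral_mono ((hint z).sub (hint w)).abs (integrable_const _) fun p => ?_
          have : |‖z - p‖ - ‖w - p‖| ≤ ‖(z - p) - (w - p)‖ := abs_norm_sub_norm_le _ _
          have hzw : (z - p) - (w - p) = z - w := by abel
          rw [hzw] at this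
          rw [dist_eq_norm]
          exact this
      _ = dist z w := by simp
  have hcont : Continuous f := hlip.continuous
  have hcb : IsCompact (closedBall a ρ) := isCompact_closedBall a ρ
  obtain ⟨y₀, hy₀, hmin⟩ := hcb.exists_isMinOn ⟨a, mem_closedBall_self hρ.le⟩
    hcont.continuousOn
  have hMne : M.Nonempty := ⟨y₀, hM ▸ ⟨hy₀, hmin⟩⟩
  have hMsub : M ⊆ closedBall a ρ := by rw [hM]; exact fun y hy => hy.1
  have hMcl : IsClosed M := by
    rw [hM]
    have heq : {y ∈ closedBall a ρ | IsMinOn f (closedBall a ρ) y}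
        = closedBall a ρ ∩ ⋂ z ∈ closedBall a ρ, {y | f y ≤ f z} := by
      ext y
      simp only [Set.mem_setOf_eq, Set.mem_inter_iff, Set.mem_iInter, isMinOn_iff]
    rw [heq]
    exact Metric.isClosed_closedBall.inter
      (isClosed_biInter fun z _ => isClosed_le hcont continuous_const)
  have hMcompact : IsCompact M := hcb.of_isClosed_subset hMcl hMsub
  have hbdd : BddBelow (f '' closedBall a ρ) :=
    (hcb.image_of_continuousOn hcont.continuousOn).bddBelow
  have hfstar_le : ∀ z ∈ closedBall a ρ, fstar ≤ f z := by
    intro z hz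
    rw [hfstar]
    exact csInf_le hbdd (Set.mem_image_of_mem f hz)
  have hfM : ∀ y ∈ M, f y = fstar := by
    intro y hy
    rw [hM] at hy
    refine le_antisymm ?_ (hfstar_le y hy.1)
    rw [hfstar]
    refine le_csInf ⟨f y, Set.mem_image_of_mem f hy.1⟩ ?_
    rintro b ⟨z, hz, rfl⟩
    exact hy.2 hz
  obtain ⟨ym, hymM, hdist⟩ := hMcompact.exists_infDist_eq_dist hMne x
  have hymcb : ym ∈ closedBall a ρ := hMsub hymM
  have h1 := part1 ym hymcb
  rw [hfM ym hymM] at h1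
  -- compare the two coefficients
  have hcoef : 2 * t / ‖H x‖ * (fstar - f x) ≤ 2 * t * (fstar - f x) := by
    have hle : fstar - f x ≤ 0 := by linarith [hfstar_le x hx]
    have h2t : 2 * t ≤ 2 * t / ‖H x‖ := by
      rw [le_div_iff₀ hHnorm]
      nlinarith
    exact mul_le_mul_of_nonpos_right h2t hle
  have hinf1 : infDist x' M ≤ ‖x' - ym‖ := by
    rw [← dist_eq_norm]
    exact infDist_le_dist_of_mem hymM
  have hinf1sq : infDist x' M ^ 2 ≤ ‖x' - ym‖ ^ 2 :=
    pow_le_pow_left₀ infDist_nonneg hinf1 2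
  have hxym : ‖x - ym‖ = infDist x M := by rw [hdist, dist_eq_norm]
  calc infDist x' M ^ 2 ≤ ‖x' - ym‖ ^ 2 := hinf1sq
    _ ≤ ‖x - ym‖ ^ 2 + t ^ 2 + 2 * t / ‖H x‖ * (fstar - f x) := h1
    _ ≤ ‖x - ym‖ ^ 2 + t ^ 2 + 2 * t * (fstar - f x) := by linarith [hcoef]
    _ = infDist x M ^ 2 + t ^ 2 + 2 * t * (fstar - f x) := by rw [hxym]
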